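/- Define Euler's difference table entries e_k^j for 0 ≤ j ≤ k by e_j^j = j! and e_k^j = e_k^{j+1} - e_{k-1}^j. Then e_k^0 = d_k, the number of derangements of a k-element set. -/
import Mathlib


/-- Euler's difference table: `eulerE j j = j!` and `eulerE k j = eulerE k (j+1) - eulerE (k-1) j`. -/
def eulerE : ℕ → ℕ → ℤ
  | k, j =>
    if _h : k ≤ j then (Nat.factorial k : ℤ)
    else eulerE k (j + 1) - eulerE (k - 1) j
  termination_by k j => k - j
  decreasing_by all_goals omega

lemma eulerE_key : ∀ m k j : ℕ, k - j = m →
    eulerE k j = ∑ i ∈ Finset.range (m + 1),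
      (-1 : ℤ) ^ i * ((m.choose i : ℤ)) * (Nat.factorial (k - i) : ℤ) := by
  intro m
  induction m with
  | zero =>
    intro k j h
    rw [eulerE]
    simp [show k ≤ j by omega, Nat.sub_zero]
  | succ m ih =>
    intro k j h
    have hjk : ¬ k ≤ j := by omega
    rw [eulerE]
    rw [dif_neg hjk]
    have h1 : k - (j + 1) = m := by omega
    have h2 : (k - 1) - j = m := by omega
    rw [ih k (j + 1) h1, ih (k - 1) j h2]
    rw [Finset.sum_range_succ' (fun i => (-1 : ℤ) ^ i * ((m + 1).choose i : ℤ)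
      * (Nat.factorial (k - i) : ℤ)) (m + 1)]
    have hsplit : ∀ i : ℕ, ((m + 1).choose (i + 1) : ℤ) =
        (m.choose i : ℤ) + (m.choose (i + 1) : ℤ) := by
      intro i
      rw [← Nat.cast_add, Nat.choose_succ_succ]
    have expand : ∀ i ∈ Finset.range (m + 1),
        (-1 : ℤ) ^ (i + 1) * ((m + 1).choose (i + 1) : ℤ) * (Nat.factorial (k - (i + 1)) : ℤ)
        = -((-1 : ℤ) ^ i * (m.choose i : ℤ) * (Nat.factorial (k - 1 - i) : ℤ))
          + (-1 : ℤ) ^ (i + 1) * (m.choose (i + 1) : ℤ) * (Nat.factorial (k - (i + 1)) : ℤ) := by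
      intro i _
      rw [hsplit i]
      have : k - 1 - i = k - (i + 1) := by omega
      rw [this]
      ring
    rw [Finset.sum_congr rfl expand, Finset.sum_add_distrib]
    have e1 : ∑ i ∈ Finset.range (m + 1),
        -((-1 : ℤ) ^ i * (m.choose i : ℤ) * (Nat.factorial (k - 1 - i) : ℤ))
        = -∑ i ∈ Finset.range (m + 1),
            (-1 : ℤ) ^ i * (m.choose i : ℤ) * (Nat.factorial (k - 1 - i) : ℤ) := by
      rw [Finset.sum_neg_distrib]
    have e2 : ∑ i ∈ Finset.range (m + 1),
        (-1 : ℤ) ^ (i + 1) * (m.choose (i + 1) : ℤ) * (Nat.factorial (k - (i + 1)) : ℤ)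
        = (∑ i ∈ Finset.range (m + 1 + 1),
            (-1 : ℤ) ^ i * (m.choose i : ℤ) * (Nat.factorial (k - i) : ℤ))
          - (Nat.factorial k : ℤ) := by
      rw [Finset.sum_range_succ' (fun i => (-1 : ℤ) ^ i * (m.choose i : ℤ)
        * (Nat.factorial (k - i) : ℤ)) (m + 1)]
      simp
    have e3 : ∑ i ∈ Finset.range (m + 1 + 1),
        (-1 : ℤ) ^ i * (m.choose i : ℤ) * (Nat.factorial (k - i) : ℤ)
        = ∑ i ∈ Finset.range (m + 1),
            (-1 : ℤ) ^ i * (m.choose i : ℤ) * (Nat.factorial (k - i) : ℤ) := by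
      rw [Finset.sum_range_succ]
      simp [Nat.choose_succ_self]
    rw [e1, e2, e3]
    simp only [Nat.choose_zero_right, Nat.cast_one, Nat.sub_zero, pow_zero, one_mul]
    ring

theorem eulerE_zero_eq_numDerangements (k : ℕ) :
    eulerE k 0 = (numDerangements k : ℤ) := by
  rw [eulerE_key k k 0 (by omega), numDerangements_sum]
  refine Finset.sum_congr rfl fun i hi => ?_
  have hik : i ≤ k := by
    have := Finset.mem_range.mp hi; omega
  have hnat : k.choose i * Nat.factorial (k - i) * Nat.factorial i
      = Nat.ascFactorial (i + 1) (k - i) * Nat.factorial i := by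
    have h1 : k.choose i * Nat.factorial i * Nat.factorial (k - i) = Nat.factorial k :=
      Nat.choose_mul_factorial_mul_factorial hik
    have h2 : Nat.factorial i * Nat.ascFactorial (i + 1) (k - i) = Nat.factorial k := by
      rw [Nat.factorial_mul_ascFactorial i (k - i), Nat.add_sub_cancel' hik]
    calc k.choose i * Nat.factorial (k - i) * Nat.factorial i
        = k.choose i * Nat.factorial i * Nat.factorial (k - i) := by ring
      _ = Nat.factorial k := h1
      _ = Nat.factorial i * Nat.ascFactorial (i + 1) (k - i) := h2.symm
      _ = Nat.ascFactorial (i + 1) (k - i) * Nat.factorial i := by ring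
  have hcancel : (k.choose i : ℤ) * (Nat.factorial (k - i) : ℤ)
      = (Nat.ascFactorial (i + 1) (k - i) : ℤ) := by
    have := mul_right_cancel₀ (a := (k.choose i * Nat.factorial (k - i) : ℕ))
      (b := (Nat.factorial i : ℕ)) (Nat.factorial_ne_zero i) hnat
    exact_mod_cast this
  rw [mul_assoc, hcancel]
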